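/- Let f : ℂ → ℂ be a nonconstant entire function, let R > 0, and set Ω = {z : ℂ | R < |z|}. Then for every compact set K ⊆ ℂ, only finitely many connected components of the open set f⁻¹(Ω) intersect K. Equivalently, if (zₙ) is a sequence of points of f⁻¹(Ω) such that zₙ and zₘ lie in distinct connected components of f⁻¹(Ω) whenever n ≠ m, then |zₙ| → ∞. -/

import Mathlib

open Set Metric

namespace TractsAux

noncomputable def gam (z₀ : ℂ) (t : ℝ) : ℂ := z₀ + Complex.exp (t * Complex.I)

noncomputable def phi (f : ℂ → ℂ) (R : ℝ) (z₀ : ℂ) (t : ℝ) : ℝ :=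
  (f (gam z₀ t)).re ^ 2 + (f (gam z₀ t)).im ^ 2 - R ^ 2

lemma abs_iff {R : ℝ} (hR : 0 < R) (w : ℂ) :
    R < ‖w‖ ↔ 0 < w.re ^ 2 + w.im ^ 2 - R ^ 2 := by
  have h : ‖w‖ ^ 2 = w.re ^ 2 + w.im ^ 2 := by
    rw [Complex.sq_norm, Complex.normSq_apply]; ring
  have hnn : 0 ≤ ‖w‖ := norm_nonneg _
  constructor
  · intro hlt; nlinarith
  · intro hlt; nlinarith

lemma gam_continuous (z₀ : ℂ) : Continuous (gam z₀) := by
  unfold gam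
  continuity

lemma gam_periodic (z₀ : ℂ) (t : ℝ) : gam z₀ (t + 2 * Real.pi) = gam z₀ t := by
  unfold gam
  have h : ((t + 2 * Real.pi : ℝ) : ℂ) * Complex.I
      = (t : ℂ) * Complex.I + 2 * (Real.pi : ℂ) * Complex.I := by
    push_cast; ring
  rw [h, Complex.exp_add, Complex.exp_two_pi_mul_I, mul_one]

lemma gam_surj {z₀ x : ℂ} (hx : x ∈ sphere z₀ 1) :
    ∃ t ∈ Ico (0 : ℝ) (2 * Real.pi), gam z₀ t = x := by
  have habs : ‖x - z₀‖ = 1 := by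
    rw [mem_sphere, Complex.dist_eq] at hx; exact hx
  set w := x - z₀ with hw
  have hexp : Complex.exp ((w.arg : ℂ) * Complex.I) = w := by
    have := Complex.norm_mul_exp_arg_mul_I w
    rwa [habs, Complex.ofReal_one, one_mul] at this
  have harg := Complex.arg_mem_Ioc w
  have hπ : 0 < Real.pi := Real.pi_pos
  by_cases h : 0 ≤ w.arg
  · refine ⟨w.arg, ⟨h, by linarith [harg.2]⟩, ?_⟩
    unfold gam
    rw [hexp, hw]; ring
  · push_neg at h
    refine ⟨w.arg + 2 * Real.pi, ⟨by linarith [harg.1], by linarith⟩, ?_⟩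
    have := gam_periodic z₀ w.arg
    rw [this]
    unfold gam
    rw [hexp, hw]; ring

lemma phi_analyticAt (f : ℂ → ℂ) (hf : Differentiable ℂ f) (R : ℝ) (z₀ : ℂ) (t : ℝ) :
    AnalyticAt ℝ (phi f R z₀) t := by
  have h1 : AnalyticAt ℝ (fun s : ℝ => (s : ℂ)) t := Complex.ofRealCLM.analyticAt t
  have h2 : AnalyticAt ℝ (fun s : ℝ => (s : ℂ) * Complex.I) t := h1.mul analyticAt_const
  have h3 : AnalyticAt ℝ (fun s : ℝ => Complex.exp ((s : ℂ) * Complex.I)) t :=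
    (analyticAt_cexp.restrictScalars).comp h2
  have h4 : AnalyticAt ℝ (gam z₀) t := by
    have : AnalyticAt ℝ (fun s : ℝ => z₀ + Complex.exp ((s : ℂ) * Complex.I)) t :=
      analyticAt_const.add h3
    exact this
  have h5 : AnalyticAt ℝ (fun s : ℝ => f (gam z₀ s)) t :=
    ((hf.analyticAt _).restrictScalars).comp h4
  have h6 : AnalyticAt ℝ (fun s : ℝ => (f (gam z₀ s)).re) t :=
    (Complex.reCLM.analyticAt _).comp h5
  have h7 : AnalyticAt ℝ (fun s : ℝ => (f (gam z₀ s)).im) t :=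
    (Complex.imCLM.analyticAt _).comp h5
  have : AnalyticAt ℝ (fun s : ℝ =>
      (f (gam z₀ s)).re ^ 2 + (f (gam z₀ s)).im ^ 2 - R ^ 2) t :=
    ((h6.pow 2).add (h7.pow 2)).sub analyticAt_const
  exact this

lemma phi_continuous (f : ℂ → ℂ) (hf : Differentiable ℂ f) (R : ℝ) (z₀ : ℂ) :
    Continuous (phi f R z₀) :=
  continuous_iff_continuousAt.mpr fun t => (phi_analyticAt f hf R z₀ t).continuousAt

lemma mem_U_iff {f : ℂ → ℂ} {R : ℝ} (hR : 0 < R) (z₀ : ℂ) (t : ℝ) :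
    gam z₀ t ∈ f ⁻¹' {w : ℂ | R < ‖w‖} ↔ 0 < phi f R z₀ t := by
  simp only [Set.mem_preimage, Set.mem_setOf_eq, phi]
  exact abs_iff hR _

lemma phi_periodic (f : ℂ → ℂ) (R : ℝ) (z₀ : ℂ) (t : ℝ) :
    phi f R z₀ (t + 2 * Real.pi) = phi f R z₀ t := by
  unfold phi
  rw [gam_periodic]

/-- Every connected component of `{|f| > R}` is unbounded. -/
lemma component_unbounded (f : ℂ → ℂ) (hf : Differentiable ℂ f) {R : ℝ}
    {x : ℂ} (hx : x ∈ f ⁻¹' {w : ℂ | R < ‖w‖}) :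
    ¬ Bornology.IsBounded
      (connectedComponentIn (f ⁻¹' {w : ℂ | R < ‖w‖}) x) := by
  intro hb
  set U := f ⁻¹' {w : ℂ | R < ‖w‖} with hUdef
  have hUopen : IsOpen U :=
    (isOpen_lt continuous_const continuous_norm).preimage hf.continuous
  set E := connectedComponentIn U x with hEdef
  have hEopen : IsOpen E := hUopen.connectedComponentIn
  have hxE : x ∈ E := mem_connectedComponentIn hx
  have hfr : ∀ w ∈ frontier E, ‖f w‖ ≤ R := by
    intro w hw
    have hwE : w ∉ E := by
      intro hwE
      rw [frontier_eq_closure_inter_closure, hEopen.isClosed_compl.closure_eq] at hw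
      exact hw.2 hwE
    have hwcl : w ∈ closure E := hw.1
    have hwU : w ∉ U := by
      intro hwU
      have hopen : IsOpen (connectedComponentIn U w) := hUopen.connectedComponentIn
      have hmem : w ∈ connectedComponentIn U w := mem_connectedComponentIn hwU
      obtain ⟨y, hy1, hy2⟩ :=
        mem_closure_iff.1 hwcl _ hopen hmem
      have e1 : connectedComponentIn U w = connectedComponentIn U y :=
        connectedComponentIn_eq hy1
      have hy2' : y ∈ connectedComponentIn U x := hy2
      have e2 : connectedComponentIn U x = connectedComponentIn U y :=
        connectedComponentIn_eq hy2'
      exact hwE (show w ∈ E from by rw [hEdef, e2, ← e1]; exact hmem)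
    have : ¬ R < ‖f w‖ := hwU
    exact not_lt.1 this
  have hd : DiffContOnCl ℂ f E := ⟨hf.differentiableOn, hf.continuous.continuousOn⟩
  have hle := Complex.norm_le_of_forall_mem_frontier_norm_le hb hd hfr (subset_closure hxE)
  have : R < ‖f x‖ := hx
  exact absurd this (not_lt.2 hle)

/-- Only finitely many components meet a unit sphere. -/
lemma sphere_finite (f : ℂ → ℂ) (hf : Differentiable ℂ f) {R : ℝ} (hR : 0 < R) (z₀ : ℂ) :
    {C : Set ℂ |
        (∃ z ∈ f ⁻¹' {w : ℂ | R < ‖w‖},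
          C = connectedComponentIn (f ⁻¹' {w : ℂ | R < ‖w‖}) z) ∧
        (C ∩ sphere z₀ 1).Nonempty}.Finite := by
  set U := f ⁻¹' {w : ℂ | R < ‖w‖} with hUdef
  set φ := phi f R z₀ with hφdef
  have hφcont : Continuous φ := phi_continuous f hf R z₀
  set Z := {t ∈ Icc (0 : ℝ) (4 * Real.pi) | φ t = 0} with hZdef
  have hπ : 0 < Real.pi := Real.pi_pos
  by_cases hZinf : Z.Infinite
  · -- identity theorem: φ ≡ 0, so U misses the sphere and the set is empty
    obtain ⟨a, -, hacc⟩ := hZinf.exists_accPt_of_subset_isCompact isCompact_Icc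
      (fun t ht => ht.1)
    have hfreq : ∃ᶠ s in nhdsWithin a {a}ᶜ, φ s = 0 := by
      rw [frequently_nhdsWithin_iff]
      exact (accPt_iff_frequently.1 hacc).mono fun y hy => ⟨hy.2.2, hy.1⟩
    have hzero : ∀ t : ℝ, phi f R z₀ t = 0 := by
      have := AnalyticOnNhd.eqOn_zero_of_preconnected_of_frequently_eq_zero
        (fun t _ => phi_analyticAt f hf R z₀ t) isPreconnected_univ (mem_univ a) hfreq
      intro t; exact this (mem_univ t)
    convert Set.finite_empty
    rw [Set.eq_empty_iff_forall_notMem]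
    rintro C ⟨⟨z, hz, rfl⟩, x, hxC, hxS⟩
    obtain ⟨t, -, rfl⟩ := gam_surj hxS
    have : gam z₀ t ∈ U := connectedComponentIn_subset U z hxC
    have h2 := (mem_U_iff hR z₀ t).1 this
    rw [hzero t] at h2
    exact lt_irrefl 0 h2
  · rw [Set.not_infinite] at hZinf
    by_cases hpos : ∀ t ∈ Icc (0 : ℝ) (2 * Real.pi), 0 < φ t
    · -- whole circle in U: at most one component meets the sphere
      have hconn : IsPreconnected (gam z₀ '' Icc 0 (2 * Real.pi)) :=
        isPreconnected_Icc.image _ (gam_continuous z₀).continuousOn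
      have hsub : gam z₀ '' Icc 0 (2 * Real.pi) ⊆ U := by
        rintro _ ⟨t, ht, rfl⟩
        exact (mem_U_iff hR z₀ t).2 (hpos t ht)
      have h0mem : gam z₀ 0 ∈ gam z₀ '' Icc 0 (2 * Real.pi) :=
        ⟨0, ⟨le_refl _, by positivity⟩, rfl⟩
      apply Set.Finite.subset (Set.finite_singleton
        (connectedComponentIn U (gam z₀ 0)))
      rintro C ⟨⟨z, hz, rfl⟩, x, hxC, hxS⟩
      obtain ⟨t, htI, rfl⟩ := gam_surj hxS
      have hxmem : gam z₀ t ∈ gam z₀ '' Icc 0 (2 * Real.pi) :=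
        ⟨t, ⟨htI.1, htI.2.le⟩, rfl⟩
      have hCx : connectedComponentIn U z = connectedComponentIn U (gam z₀ t) :=
        connectedComponentIn_eq hxC
      have himg : gam z₀ '' Icc 0 (2 * Real.pi) ⊆ connectedComponentIn U (gam z₀ t) :=
        hconn.subset_connectedComponentIn hxmem hsub
      have h0C : gam z₀ 0 ∈ connectedComponentIn U z := by
        rw [hCx]; exact himg h0mem
      exact Set.mem_singleton_iff.2 (connectedComponentIn_eq h0C)
    · push_neg at hpos
      obtain ⟨s₀, hs₀I, hs₀⟩ := hpos
      -- key: to each component associate a zero of φ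
      have key : ∀ C ∈ {C : Set ℂ |
          (∃ z ∈ U, C = connectedComponentIn U z) ∧ (C ∩ sphere z₀ 1).Nonempty},
          ∃ t m : ℝ, t ∈ Ico (0 : ℝ) (2 * Real.pi) ∧
            C = connectedComponentIn U (gam z₀ t) ∧ m ∈ Z ∧ t < m ∧
            ∀ u, t ≤ u → u < m → gam z₀ u ∈ C := by
        rintro C ⟨⟨z, hz, rfl⟩, x, hxC, hxS⟩
        obtain ⟨t, htI, rfl⟩ := gam_surj hxS
        have hCeq : connectedComponentIn U z = connectedComponentIn U (gam z₀ t) :=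
          connectedComponentIn_eq hxC
        have hxU : gam z₀ t ∈ U := connectedComponentIn_subset U z hxC
        have hφt : 0 < φ t := (mem_U_iff hR z₀ t).1 hxU
        -- find s ∈ Ioc t (t+2π) with φ s ≤ 0
        obtain ⟨s, hts, hs2π, hφs⟩ : ∃ s, t < s ∧ s ≤ t + 2 * Real.pi ∧ φ s ≤ 0 := by
          by_cases h : t < s₀
          · exact ⟨s₀, h, by linarith [hs₀I.2, htI.1], hs₀⟩
          · push_neg at h
            refine ⟨s₀ + 2 * Real.pi, by linarith [htI.2, hs₀I.1], by linarith, ?_⟩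
            exact le_trans (le_of_eq (phi_periodic f R z₀ s₀)) hs₀
        -- a zero of φ in Ioc t s
        obtain ⟨u, huI, huz⟩ : ∃ u ∈ Ioc t s, φ u = 0 :=
          intermediate_value_Ioc' hts.le hφcont.continuousOn ⟨hφs, hφt⟩
        set A := Icc t (t + 2 * Real.pi) ∩ φ ⁻¹' {0} with hAdef
        have hAne : A.Nonempty := ⟨u, ⟨⟨huI.1.le, le_trans huI.2 hs2π⟩, huz⟩⟩
        have hAclosed : IsClosed A :=
          isClosed_Icc.inter (isClosed_singleton.preimage hφcont)
        have hAbdd : BddBelow A := ⟨t, fun v hv => hv.1.1⟩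
        set m := sInf A with hmdef
        have hmA : m ∈ A := hAclosed.csInf_mem hAne hAbdd
        have htm : t < m := by
          rcases eq_or_lt_of_le hmA.1.1 with h | h
          · exfalso; rw [← h] at hmA
            have : φ t = 0 := hmA.2
            rw [this] at hφt; exact lt_irrefl 0 hφt
          · exact h
        have hmZ : m ∈ Z := by
          constructor
          · exact ⟨le_trans htI.1 hmA.1.1, by linarith [hmA.1.2, htI.2]⟩
          · exact hmA.2
        refine ⟨t, m, htI, hCeq, hmZ, htm, ?_⟩
        -- the arc [t, m) lies in the component
        have harcpos : ∀ v, t ≤ v → v < m → 0 < φ v := by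
          intro v htv hvm
          by_contra hneg
          push_neg at hneg
          rcases eq_or_lt_of_le htv with h | h
          · rw [← h] at hneg; exact absurd hφt (not_lt.2 hneg)
          · obtain ⟨v', hv'I, hv'z⟩ :=
              intermediate_value_Ioc' h.le hφcont.continuousOn ⟨hneg, hφt⟩
            have hv'A : v' ∈ A :=
              ⟨⟨hv'I.1.le, by linarith [hv'I.2, hmA.1.2]⟩, hv'z⟩
            have := csInf_le hAbdd hv'A
            linarith [hv'I.2]
        intro v htv hvm
        have hconn : IsPreconnected (gam z₀ '' Ico t m) :=
          isPreconnected_Ico.image _ (gam_continuous z₀).continuousOn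
        have hsub : gam z₀ '' Ico t m ⊆ U := by
          rintro _ ⟨w, hw, rfl⟩
          exact (mem_U_iff hR z₀ w).2 (harcpos w hw.1 hw.2)
        have htmem : gam z₀ t ∈ gam z₀ '' Ico t m := ⟨t, ⟨le_refl _, htm⟩, rfl⟩
        have := hconn.subset_connectedComponentIn htmem hsub
        rw [hCeq]
        exact this ⟨v, ⟨htv, hvm⟩, rfl⟩
      choose! tC mC h1 h2 h3 h4 h5 using key
      apply Set.Finite.of_finite_image (f := mC)
      · apply hZinf.subset
        rintro _ ⟨C, hC, rfl⟩
        exact h3 C hC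
      · have inj2 : ∀ C₁ C₂, C₁ ∈ {C : Set ℂ |
            (∃ z ∈ U, C = connectedComponentIn U z) ∧ (C ∩ sphere z₀ 1).Nonempty} →
            C₂ ∈ {C : Set ℂ |
            (∃ z ∈ U, C = connectedComponentIn U z) ∧ (C ∩ sphere z₀ 1).Nonempty} →
            tC C₁ < tC C₂ → mC C₁ = mC C₂ → C₁ = C₂ := by
          intro C₁ C₂ hC₁ hC₂ hlt hmeq
          have hx2 : gam z₀ (tC C₂) ∈ C₁ :=
            h5 C₁ hC₁ (tC C₂) hlt.le (by rw [hmeq]; exact h4 C₂ hC₂)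
          rw [h2 C₁ hC₁] at hx2
          have heq := connectedComponentIn_eq hx2
          rw [h2 C₁ hC₁, h2 C₂ hC₂]
          exact heq
        intro C₁ hC₁ C₂ hC₂ hm
        rcases lt_trichotomy (tC C₁) (tC C₂) with h | h | h
        · exact inj2 _ _ hC₁ hC₂ h hm
        · rw [h2 C₁ hC₁, h2 C₂ hC₂, h]
        · exact (inj2 _ _ hC₂ hC₁ h hm.symm).symm

/-- Only finitely many components meet a unit ball. -/
lemma ball_finite (f : ℂ → ℂ) (hf : Differentiable ℂ f) {R : ℝ} (hR : 0 < R) (z₀ : ℂ) :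
    {C : Set ℂ |
        (∃ z ∈ f ⁻¹' {w : ℂ | R < ‖w‖},
          C = connectedComponentIn (f ⁻¹' {w : ℂ | R < ‖w‖}) z) ∧
        (C ∩ ball z₀ 1).Nonempty}.Finite := by
  apply (sphere_finite f hf hR z₀).subset
  rintro C ⟨⟨z, hz, rfl⟩, a, haC, haB⟩
  refine ⟨⟨z, hz, rfl⟩, ?_⟩
  set U := f ⁻¹' {w : ℂ | R < ‖w‖} with hUdef
  have hub := component_unbounded f hf hz
  have hnotsub : ¬ (connectedComponentIn U z ⊆ closedBall z₀ 1) := fun h =>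
    hub (isBounded_closedBall.subset h)
  obtain ⟨b, hbC, hb⟩ := not_subset.1 hnotsub
  have hbd : 1 < dist b z₀ := by
    by_contra h
    exact hb (mem_closedBall.2 (not_lt.1 h))
  have hconn : IsPreconnected (connectedComponentIn U z) :=
    isPreconnected_connectedComponentIn
  have hcont : ContinuousOn (fun w => dist w z₀) (connectedComponentIn U z) :=
    (continuous_id.dist continuous_const).continuousOn
  have hmem : (1 : ℝ) ∈ Icc (dist a z₀) (dist b z₀) :=
    ⟨(mem_ball.1 haB).le, hbd.le⟩
  obtain ⟨w, hwC, hw⟩ := hconn.intermediate_value haC hbC hcont hmem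
  exact ⟨w, hwC, mem_sphere.2 hw⟩

end TractsAux

/-- For a nonconstant entire function `f` and `Ω = {|z| > R}`, only finitely many
connected components of `f⁻¹(Ω)` meet any given compact set; equivalently, points
of pairwise distinct components tend to infinity. -/
theorem finitely_many_tracts_meet_compact
    (f : ℂ → ℂ)
    (hf : Differentiable ℂ f)
    (hnc : ¬ ∃ c : ℂ, ∀ z : ℂ, f z = c)
    (R : ℝ) (hR : 0 < R) :
    (∀ K : Set ℂ, IsCompact K →
      {C : Set ℂ |
        (∃ z ∈ f ⁻¹' {w : ℂ | R < ‖w‖},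
          C = connectedComponentIn (f ⁻¹' {w : ℂ | R < ‖w‖}) z) ∧
        (C ∩ K).Nonempty}.Finite) ∧
    (∀ z : ℕ → ℂ, (∀ n, z n ∈ f ⁻¹' {w : ℂ | R < ‖w‖}) →
      (∀ n m, n ≠ m →
        connectedComponentIn (f ⁻¹' {w : ℂ | R < ‖w‖}) (z n) ≠
        connectedComponentIn (f ⁻¹' {w : ℂ | R < ‖w‖}) (z m)) →
      Filter.Tendsto (fun n => ‖z n‖) Filter.atTop Filter.atTop) := by
  set U := f ⁻¹' {w : ℂ | R < ‖w‖} with hUdef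
  have part1 : ∀ K : Set ℂ, IsCompact K →
      {C : Set ℂ | (∃ z ∈ U, C = connectedComponentIn U z) ∧ (C ∩ K).Nonempty}.Finite := by
    intro K hK
    obtain ⟨F, hFsub, hcover⟩ := hK.elim_nhds_subcover (fun x => ball x 1)
      (fun x _ => ball_mem_nhds x one_pos)
    apply Set.Finite.subset (Set.Finite.biUnion F.finite_toSet
      (fun x _ => TractsAux.ball_finite f hf hR x))
    rintro C ⟨hex, a, haC, haK⟩
    have := hcover haK
    simp only [Set.mem_iUnion] at this
    obtain ⟨x, hxF, hax⟩ := this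
    exact Set.mem_biUnion hxF ⟨hex, a, haC, hax⟩
  refine ⟨part1, ?_⟩
  intro z hmem hdist
  rw [Filter.tendsto_atTop]
  by_contra hcon
  push_neg at hcon
  obtain ⟨b, hb⟩ := hcon
  have hS : {n : ℕ | ‖z n‖ < b}.Infinite := by
    rw [← Nat.frequently_atTop_iff_infinite]
    exact hb.mono fun n h => h
  have hfin := part1 (closedBall 0 b) (isCompact_closedBall 0 b)
  have hinj : Set.InjOn (fun n => connectedComponentIn U (z n))
      {n : ℕ | ‖z n‖ < b} := by
    intro n _ m _ h
    by_contra hne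
    exact hdist n m hne h
  have himg : (fun n => connectedComponentIn U (z n)) '' {n : ℕ | ‖z n‖ < b}
      ⊆ {C : Set ℂ | (∃ z' ∈ U, C = connectedComponentIn U z') ∧
        (C ∩ closedBall 0 b).Nonempty} := by
    rintro _ ⟨n, hn, rfl⟩
    refine ⟨⟨z n, hmem n, rfl⟩, z n, mem_connectedComponentIn (hmem n), ?_⟩
    rw [mem_closedBall, Complex.dist_eq, sub_zero]
    exact hn.le
  exact ((Set.infinite_image_iff hinj).2 hS) (hfin.subset himg)
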